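/- arXiv:2505.03976 — 7 statements merged into one kernel-verified Lean document; each statement's English description precedes it below -/
import Mathlib

section
/- Let G be a finite group, p a prime, and q a power of p such that |G|_p divides q and q ≡ 1 mod |G|_{p'}. Then for every x ∈ G, the number of y ∈ G with y^q = x equals 0 if x is p-singular, and equals the number of p-elements of C_G(x) if x is p-regular. -/
theorem stmt_3 (G : Type*) [Group G] [Finite G] (p : ℕ) (hp : p.Prime)
    (q : ℕ) (hq : ∃ a : ℕ, q = p ^ a)
    (hdvd : p ^ ((Nat.card G).factorization p) ∣ q)
    (hmod : q ≡ 1 [MOD (Nat.card G) / p ^ ((Nat.card G).factorization p)]) (x : G) :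
    (p ∣ orderOf x → Nat.card {y : G | y ^ q = x} = 0) ∧
    (Nat.Coprime (orderOf x) p →
      Nat.card {y : G | y ^ q = x} =
        Nat.card {z : G | z ∈ Subgroup.centralizer {x} ∧ ∃ k : ℕ, orderOf z = p ^ k}) := by
  have hN : Nat.card G ≠ 0 := Nat.card_pos.ne'
  -- the p-part of any element order divides q
  have key : ∀ y : G, p ^ ((orderOf y).factorization p) ∣ q := by
    intro y
    refine dvd_trans ?_ hdvd
    apply pow_dvd_pow
    exact (Nat.factorization_le_iff_dvd (orderOf_pos y).ne' hN).2 (orderOf_dvd_natCard y) p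
  constructor
  · intro hpx
    have hempty : {y : G | y ^ q = x} = ∅ := by
      ext y
      simp only [Set.mem_setOf_eq, Set.mem_empty_iff_false, iff_false]
      intro hyx
      have hn0 : orderOf y ≠ 0 := (orderOf_pos y).ne'
      set b := orderOf y / p ^ ((orderOf y).factorization p) with hb
      have hxb : x ^ b = 1 := by
        rw [← hyx, ← pow_mul]
        apply orderOf_dvd_iff_pow_eq_one.1
        calc orderOf y = p ^ ((orderOf y).factorization p) * b :=
              (Nat.ordProj_mul_ordCompl_eq_self (orderOf y) p).symm
          _ ∣ q * b := mul_dvd_mul (key y) dvd_rfl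
      have hdb : p ∣ b := hpx.trans (orderOf_dvd_of_pow_eq_one hxb)
      have hcop : Nat.Coprime p b := Nat.coprime_ordCompl hp hn0
      exact hp.one_lt.ne' (hcop.eq_one_of_dvd hdb)
    rw [hempty]
    simp
  · intro hco
    have hx1 : x ^ q = x := by
      have h2 : orderOf x ∣ Nat.card G / p ^ ((Nat.card G).factorization p) := by
        have h1 : orderOf x ∣
            (Nat.card G / p ^ ((Nat.card G).factorization p)) *
              p ^ ((Nat.card G).factorization p) := by
          rw [mul_comm, Nat.ordProj_mul_ordCompl_eq_self (Nat.card G) p]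
          exact orderOf_dvd_natCard x
        exact (hco.pow_right _).dvd_of_dvd_mul_right h1
      have hmq : q ≡ 1 [MOD orderOf x] := hmod.of_dvd h2
      calc x ^ q = x ^ 1 := pow_eq_pow_iff_modEq.2 hmq
        _ = x := pow_one x
    have hcomm : ∀ y : G, y ^ q = x → Commute x y := by
      intro y h
      rw [← h]
      exact (Commute.refl y).pow_left q
    refine Nat.card_congr ⟨fun y => ⟨y.1 * x⁻¹, ?_, ?_⟩, fun z => ⟨z.1 * x, ?_⟩, ?_, ?_⟩
    · -- centralizer membership
      refine Subgroup.mem_centralizer_iff.mpr fun g hg => ?_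
      rw [Set.mem_singleton_iff] at hg
      rw [hg]
      exact ((hcomm y.1 y.2).mul_right (Commute.refl x).inv_right).eq
    · -- p-element
      obtain ⟨a, rfl⟩ := hq
      have hy : (y : G) ^ (p ^ a) = x := y.2
      have hpow : ((y : G) * x⁻¹) ^ (p ^ a) = 1 := by
        rw [((hcomm _ hy).symm.inv_right).mul_pow, hy, inv_pow, hx1, mul_inv_cancel]
      obtain ⟨k, -, hk⟩ := (Nat.dvd_prime_pow hp).1 (orderOf_dvd_of_pow_eq_one hpow)
      exact ⟨k, hk⟩
    · -- inverse map lands in solution set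
      obtain ⟨hzc, k, hk⟩ := z.2
      have hzx : Commute z.1 x := by
        have := Subgroup.mem_centralizer_iff.mp hzc x (Set.mem_singleton x)
        exact this.symm
      have hz1 : z.1 ^ q = 1 := by
        apply orderOf_dvd_iff_pow_eq_one.1
        rw [hk]
        have hkv : k ≤ (Nat.card G).factorization p :=
          (Nat.Prime.pow_dvd_iff_le_factorization hp hN).1 (hk ▸ orderOf_dvd_natCard z.1)
        exact (pow_dvd_pow p hkv).trans hdvd
      show (z.1 * x) ^ q = x
      rw [hzx.mul_pow, hz1, one_mul, hx1]
    · intro y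
      exact Subtype.ext (by simp)
    · intro z
      exact Subtype.ext (by simp)
end

section
/- Let G be a finite group and p a prime. Then |G| equals the sum, over a set of representatives y of the conjugacy classes of p-regular elements of G, of [G : C_G(y)] times the number of p-elements of C_G(y). -/
open Subgroup

section aux

variable {G : Type*} [Group G] [Finite G] {p : ℕ}

lemma decomp_exists (hp : p.Prime) (g : G) :
    ∃ y z : G, y * z = g ∧ y ∈ zpowers g ∧ z ∈ zpowers g ∧
      (orderOf y).Coprime p ∧ ∃ k : ℕ, orderOf z = p ^ k := by
  set n := orderOf g with hn
  have hn0 : n ≠ 0 := (orderOf_pos g).ne'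
  set a := n.factorization p with ha
  set m := n / p ^ a with hm
  have hnm : p ^ a * m = n := Nat.ordProj_mul_ordCompl_eq_self n p
  have hpm : Nat.Coprime p m := Nat.coprime_ordCompl hp hn0
  have hco : (p ^ a).Coprime m := hpm.pow_left a
  obtain ⟨e, he1, he0⟩ := Nat.chineseRemainder hco 1 0
  obtain ⟨f, hf0, hf1⟩ := Nat.chineseRemainder hco 0 1
  refine ⟨g ^ f, g ^ e, ?_, zpowers g |>.pow_mem (mem_zpowers g) f,
    zpowers g |>.pow_mem (mem_zpowers g) e, ?_, ?_⟩
  · rw [← pow_add]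
    conv_rhs => rw [← pow_one g]
    rw [pow_eq_pow_iff_modEq, ← hn, ← hnm]
    refine (Nat.modEq_and_modEq_iff_modEq_mul hco).mp ⟨?_, ?_⟩
    · simpa using (hf0.add he1 : f + e ≡ 0 + 1 [MOD p ^ a])
    · simpa using (hf1.add he0 : f + e ≡ 1 + 0 [MOD m])
  · have hfd : p ^ a ∣ f := (Nat.modEq_zero_iff_dvd).mp hf0
    have hdvd : orderOf (g ^ f) ∣ m := by
      apply orderOf_dvd_of_pow_eq_one
      rw [← pow_mul, ← orderOf_dvd_iff_pow_eq_one, ← hn, ← hnm]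
      exact Nat.mul_dvd_mul hfd dvd_rfl
    exact Nat.Coprime.coprime_dvd_left hdvd (Nat.coprime_comm.mp hpm)
  · have hed : m ∣ e := (Nat.modEq_zero_iff_dvd).mp he0
    have hdvd : orderOf (g ^ e) ∣ p ^ a := by
      apply orderOf_dvd_of_pow_eq_one
      rw [← pow_mul, ← orderOf_dvd_iff_pow_eq_one, ← hn, ← hnm, mul_comm (p ^ a) m]
      exact Nat.mul_dvd_mul hed dvd_rfl
    obtain ⟨k, -, hk⟩ := (Nat.dvd_prime_pow hp).mp hdvd
    exact ⟨k, hk⟩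

lemma decomp_unique (hp : p.Prime) {g y z y' z' : G}
    (h1 : y * z = g) (hyz : Commute y z)
    (hy : (orderOf y).Coprime p) (hz : ∃ k : ℕ, orderOf z = p ^ k)
    (hyg : y' ∈ zpowers g) (hzg : z' ∈ zpowers g) (h1' : y' * z' = g)
    (hy' : (orderOf y').Coprime p) (hz' : ∃ k : ℕ, orderOf z' = p ^ k) :
    y = y' ∧ z = z' := by
  obtain ⟨i, hi⟩ := hyg
  obtain ⟨j, hj⟩ := hzg
  replace hi : g ^ i = y' := hi
  replace hj : g ^ j = z' := hj
  have hcyg : Commute y g := by rw [← h1]; exact (Commute.refl y).mul_right hyz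
  have hczg : Commute z g := by rw [← h1]; exact hyz.symm.mul_right (Commute.refl z)
  have hcyy' : Commute y y' := hi ▸ hcyg.zpow_right i
  have hczz' : Commute z z' := hj ▸ hczg.zpow_right j
  obtain ⟨k, hk⟩ := hz
  obtain ⟨k', hk'⟩ := hz'
  have h3 : y * z = y' * z' := h1.trans h1'.symm
  have key : y'⁻¹ * y = z' * z⁻¹ := by
    rw [inv_mul_eq_iff_eq_mul, ← mul_assoc, eq_mul_inv_iff_mul_eq]
    exact h3
  have hto1 : orderOf (y'⁻¹ * y) ∣ orderOf (y'⁻¹) * orderOf y :=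
    (hcyy'.symm.inv_left).orderOf_mul_dvd_mul_orderOf
  have hto2 : orderOf (y'⁻¹ * y) ∣ orderOf z' * orderOf z⁻¹ := by
    rw [key]; exact (hczz'.symm.inv_right).orderOf_mul_dvd_mul_orderOf
  have hcop : (orderOf (y'⁻¹ * y)).Coprime p := by
    refine Nat.Coprime.coprime_dvd_left hto1 ?_
    rw [orderOf_inv]
    exact Nat.Coprime.mul hy' hy
  have hppow : orderOf (y'⁻¹ * y) ∣ p ^ (k' + k) := by
    rw [orderOf_inv, hk, hk', ← pow_add] at hto2
    exact hto2
  have ht1 : y'⁻¹ * y = 1 := by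
    rw [← orderOf_eq_one_iff]
    exact (hcop.pow_right _).eq_one_of_dvd hppow
  have hy : y = y' := (inv_mul_eq_one.mp ht1).symm
  refine ⟨hy, ?_⟩
  have := h1.trans h1'.symm
  rw [hy] at this
  exact mul_left_cancel this

lemma orderOf_conj'' (c z : G) : orderOf (c * z * c⁻¹) = orderOf z :=
  (SemiconjBy.orderOf_eq c (show c * z = (c * z * c⁻¹) * c by group)).symm

lemma orderOf_eq_of_isConj {y x : G} (h : IsConj y x) : orderOf x = orderOf y := by
  obtain ⟨c, hc⟩ := h
  exact (SemiconjBy.orderOf_eq _ hc).symm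

lemma nat_card_sigma' {ι : Type*} [Fintype ι] {α : ι → Type*} [∀ i, Finite (α i)] :
    Nat.card (Sigma α) = ∑ i, Nat.card (α i) := by
  have := fun i => Fintype.ofFinite (α i)
  simp [Nat.card_eq_fintype_card]

end aux

theorem stmt_5 (G : Type*) [Group G] [Finite G] [Fintype G] [DecidableEq G]
    (p : ℕ) (hp : p.Prime) (T : Finset G)
    (hreg : ∀ y ∈ T, Nat.Coprime (orderOf y) p)
    (hrep : ∀ g : G, Nat.Coprime (orderOf g) p → ∃! y, y ∈ T ∧ IsConj y g) :
    Nat.card G = ∑ y ∈ T, (Subgroup.centralizer {y}).index *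
      Nat.card {z : G | z ∈ Subgroup.centralizer {y} ∧ ∃ k : ℕ, orderOf z = p ^ k} := by
  classical
  -- choose the decomposition g = Y g * Z g
  choose Y Z hmulYZ hYzp hZzp hYcop hZpow using decomp_exists hp (G := G)
  have hYZcomm : ∀ g : G, Commute (Y g) (Z g) := by
    intro g
    obtain ⟨i, hi⟩ := hYzp g
    obtain ⟨j, hj⟩ := hZzp g
    rw [← hi, ← hj]
    exact (Commute.refl g |>.zpow_zpow i j)
  -- the T-representative of the p'-part
  choose f hfT hfconj using fun g : G => (hrep (Y g) (hYcop g)).exists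
  have hfmem : ∀ g : G, f g ∈ T := fun g => hfT g
  -- fiber equivalence
  have fiber_eq : ∀ y ∈ T, Nat.card {g : G // f g = y} =
      (Subgroup.centralizer {y}).index *
        Nat.card {z : G | z ∈ Subgroup.centralizer {y} ∧ ∃ k : ℕ, orderOf z = p ^ k} := by
    intro y hy
    -- bijection with Σ x conj to y, p-elements of centralizer of x
    have e1 : {g : G // f g = y} ≃
        Σ x : {x : G // IsConj y x}, {z : G // z ∈ Subgroup.centralizer {x.1} ∧ ∃ k : ℕ, orderOf z = p ^ k} := by
      refine Equiv.symm (Equiv.ofBijective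
        (fun q => ⟨q.1.1 * q.2.1, ?_⟩) ⟨?_, ?_⟩)
      · -- f (x * z) = y
        obtain ⟨⟨x, hx⟩, ⟨z, hzc, hzp⟩⟩ := q
        have hzcomm : Commute x z := Subgroup.mem_centralizer_iff.mp hzc x rfl
        have hxcop : (orderOf x).Coprime p := by
          rw [orderOf_eq_of_isConj hx]
          exact hreg y hy
        obtain ⟨hY, hZ⟩ := decomp_unique hp (g := x * z) rfl hzcomm hxcop hzp
          (hYzp _) (hZzp _) (hmulYZ _) (hYcop _) (hZpow _)
        -- Y (x*z) = x, so f (x*z) is the unique T-rep conj to x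
        have hconj : IsConj y (Y (x * z)) := hY ▸ hx
        obtain ⟨w, -, hwu⟩ := hrep (Y (x * z)) (hYcop _)
        have h1 := hwu y ⟨hy, hconj⟩
        have h2 := hwu (f (x * z)) ⟨hfmem _, hfconj _⟩
        rw [h2, ← h1]
      · -- injective
        rintro ⟨⟨x, hx⟩, ⟨z, hzc, hzp⟩⟩ ⟨⟨x', hx'⟩, ⟨z', hzc', hzp'⟩⟩ hEq
        have hEq' : x * z = x' * z' := congrArg Subtype.val hEq
        have hzcomm : Commute x z := Subgroup.mem_centralizer_iff.mp hzc x (Set.mem_singleton x)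
        have hzcomm' : Commute x' z' := Subgroup.mem_centralizer_iff.mp hzc' x' (Set.mem_singleton x')
        have hxcop : (orderOf x).Coprime p := by rw [orderOf_eq_of_isConj hx]; exact hreg y hy
        have hxcop' : (orderOf x').Coprime p := by rw [orderOf_eq_of_isConj hx']; exact hreg y hy
        set g := x * z with hg
        obtain ⟨hY, hZ⟩ := decomp_unique hp (g := g) rfl hzcomm hxcop hzp
          (hYzp _) (hZzp _) (hmulYZ _) (hYcop _) (hZpow _)
        obtain ⟨hY', hZ'⟩ := decomp_unique hp (g := g) hEq'.symm hzcomm' hxcop' hzp'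
          (hYzp _) (hZzp _) (hmulYZ _) (hYcop _) (hZpow _)
        have hxx : x = x' := hY.trans hY'.symm
        have hzz : z = z' := hZ.trans hZ'.symm
        subst hxx hzz
        rfl
      · -- surjective
        rintro ⟨g, hg⟩
        have hconj : IsConj y (Y g) := by
          obtain ⟨w, -, hwu⟩ := hrep (Y g) (hYcop g)
          have h1 := hwu (f g) ⟨hfmem g, hfconj g⟩
          rw [← hg]
          rw [← h1] at *
          exact hfconj g
        refine ⟨⟨⟨Y g, hconj⟩, ⟨Z g, ?_, hZpow g⟩⟩, ?_⟩
        · exact Subgroup.mem_centralizer_iff.mpr (by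
            rintro w rfl
            exact (hYZcomm g).eq)
        · exact Subtype.ext (hmulYZ g)
    -- card of each centralizer-p-element set is constant on the class
    have e2 : ∀ x : G, IsConj y x →
        Nat.card {z : G | z ∈ Subgroup.centralizer {x} ∧ ∃ k : ℕ, orderOf z = p ^ k} =
        Nat.card {z : G | z ∈ Subgroup.centralizer {y} ∧ ∃ k : ℕ, orderOf z = p ^ k} := by
      intro x hx
      obtain ⟨c, hc⟩ := isConj_iff.mp hx
      apply Nat.card_congr
      refine ⟨fun z => ⟨c⁻¹ * z.1 * c, ?_, ?_⟩, fun z => ⟨c * z.1 * c⁻¹, ?_, ?_⟩,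
        fun z => ?_, fun z => ?_⟩
      · obtain ⟨z, hzc, -⟩ := z
        have hcomm : x * z = z * x := Subgroup.mem_centralizer_iff.mp hzc x rfl
        refine Subgroup.mem_centralizer_iff.mpr ?_
        intro w hw
        rw [Set.mem_singleton_iff] at hw
        rw [hw, show y = c⁻¹ * x * c by rw [← hc]; group]
        calc c⁻¹ * x * c * (c⁻¹ * z * c) = c⁻¹ * (x * z) * c := by group
          _ = c⁻¹ * (z * x) * c := by rw [hcomm]
          _ = c⁻¹ * z * c * (c⁻¹ * x * c) := by group
      · obtain ⟨z, -, k, hk⟩ := z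
        exact ⟨k, by rw [show c⁻¹ * z * c = c⁻¹ * z * c⁻¹⁻¹ by group, orderOf_conj'' c⁻¹ z]; exact hk⟩
      · obtain ⟨z, hzc, -⟩ := z
        have hcomm : y * z = z * y := Subgroup.mem_centralizer_iff.mp hzc y rfl
        refine Subgroup.mem_centralizer_iff.mpr ?_
        intro w hw
        rw [Set.mem_singleton_iff] at hw
        rw [hw, ← hc]
        calc c * y * c⁻¹ * (c * z * c⁻¹) = c * (y * z) * c⁻¹ := by group
          _ = c * (z * y) * c⁻¹ := by rw [hcomm]
          _ = c * z * c⁻¹ * (c * y * c⁻¹) := by group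
      · obtain ⟨z, -, k, hk⟩ := z
        exact ⟨k, by rw [orderOf_conj'' c z]; exact hk⟩
      · apply Subtype.ext
        show c * (c⁻¹ * ↑z * c) * c⁻¹ = ↑z
        group
      · apply Subtype.ext
        show c⁻¹ * (c * ↑z * c⁻¹) * c = ↑z
        group
    -- index of centralizer = card of conjugacy class
    have hindex : (Subgroup.centralizer {y}).index = Nat.card {x : G // IsConj y x} := by
      erw [Subgroup.centralizer_eq_comap_stabilizer,
        Subgroup.index_comap_of_surjective _ (MulEquiv.surjective _),
        MulAction.index_stabilizer, ← Nat.card_coe_set_eq]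
      apply Nat.card_congr
      apply Equiv.setCongr
      ext x
      rw [ConjAct.mem_orbit_conjAct]
      exact isConj_comm
    rw [Nat.card_congr e1, nat_card_sigma']
    rw [Finset.sum_congr rfl (fun x _ => e2 x.1 x.2)]
    rw [Finset.sum_const, Finset.card_univ, ← Nat.card_eq_fintype_card, hindex, smul_eq_mul]
  -- partition of G by fibers of f
  have hmain : Nat.card G = ∑ y ∈ T, Nat.card {g : G // f g = y} := by
    have e0 : G ≃ Σ y : {y : G // y ∈ T}, {g : G // f g = ↑y} := by
      refine (Equiv.sigmaFiberEquiv (fun g : G => (⟨f g, hfmem g⟩ : {y : G // y ∈ T}))).symm.trans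
        (Equiv.sigmaCongrRight fun y => Equiv.setCongr ?_)
      ext g
      simp [Subtype.ext_iff]
    rw [Nat.card_congr e0, nat_card_sigma']
    rw [← Finset.sum_coe_sort T (fun y => Nat.card {g : G // f g = y})]
  rw [hmain]
  exact Finset.sum_congr rfl fun y hy => fiber_eq y hy
end

section
/- Let G be a finite group with a normal Sylow p-subgroup P and complement H, and let χ be the permutation character Ind_H^G(1) of G acting on the cosets of H. Then χ(y) = |C_P(y)| for every y ∈ H. -/
open scoped Pointwise


theorem stmt_9 (G : Type*) [Group G] [Finite G] (p : ℕ) (hp : p.Prime)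
    (P : Sylow p G) (hPn : (P : Subgroup G).Normal) (H : Subgroup G)
    (hHP : H ⊓ (P : Subgroup G) = ⊥) (hsup : H ⊔ (P : Subgroup G) = ⊤)
    (y : G) (hy : y ∈ H) :
    Nat.card {c : G ⧸ H // y • c = c} =
      Nat.card {x : G | x ∈ (P : Subgroup G) ∧ x ∈ Subgroup.centralizer {y}} := by
  symm
  apply Nat.card_congr
  have triv : ∀ g : G, g ∈ H → g ∈ (P : Subgroup G) → g = 1 := by
    intro g h1 h2
    have : g ∈ H ⊓ (P : Subgroup G) := ⟨h1, h2⟩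
    simpa [hHP] using this
  refine Equiv.ofBijective (fun x => ⟨QuotientGroup.mk (x : G), ?_⟩) ⟨?_, ?_⟩
  · obtain ⟨x, hxP, hxC⟩ := x
    have hc : y * x = x * y := (Subgroup.mem_centralizer_singleton_iff.mp hxC).symm
    show (QuotientGroup.mk (y * x) : G ⧸ H) = QuotientGroup.mk x
    rw [QuotientGroup.eq]
    have : (y * x)⁻¹ * x = y⁻¹ := by
      rw [hc]; group
    rw [this]; exact H.inv_mem hy
  · rintro ⟨x, hxP, hxC⟩ ⟨x', hxP', hxC'⟩ h
    have h2 : x⁻¹ * x' ∈ H := QuotientGroup.eq.mp (congrArg Subtype.val h)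
    have h3 : x⁻¹ * x' ∈ (P : Subgroup G) := Subgroup.mul_mem _ (Subgroup.inv_mem _ hxP) hxP'
    have := triv _ h2 h3
    have : x = x' := by
      have := mul_eq_one_iff_inv_eq.mp this
      simp_all
    simpa using this
  · rintro ⟨c, hc⟩
    induction c using QuotientGroup.induction_on with
    | H g =>
      have hg : g ∈ (↑(H ⊔ (P : Subgroup G)) : Set G) := by
        rw [hsup]; trivial
      rw [Subgroup.mul_normal] at hg
      obtain ⟨h, hh, u, hu, rfl⟩ := hg
      set u' := h * u * h⁻¹ with hu'
      have hu'P : u' ∈ (P : Subgroup G) := hPn.conj_mem u hu h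
      have hmk : (QuotientGroup.mk u' : G ⧸ H) = QuotientGroup.mk (h * u) := by
        rw [QuotientGroup.eq]
        have : u'⁻¹ * (h * u) = h := by rw [hu']; group
        rw [this]; exact hh
      -- fixed point condition gives u' centralizes y
      have hfix' : y • (QuotientGroup.mk u' : G ⧸ H) = QuotientGroup.mk u' := by
        rw [hmk]; exact hc
      have hfix : (QuotientGroup.mk (y * u') : G ⧸ H) = QuotientGroup.mk u' := hfix'
      have h4 : (y * u')⁻¹ * u' ∈ H := QuotientGroup.eq.mp hfix
      have h5 : u'⁻¹ * y⁻¹ * u' * y ∈ H := by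
        have : u'⁻¹ * y⁻¹ * u' * y = ((y * u')⁻¹ * u') * y := by group
        rw [this]; exact H.mul_mem h4 hy
      have h6 : u'⁻¹ * y⁻¹ * u' * y ∈ (P : Subgroup G) := by
        have h7 : u'⁻¹ * (y⁻¹ * u' * y) ∈ (P : Subgroup G) := by
          exact Subgroup.mul_mem _ (Subgroup.inv_mem _ hu'P)
            (by simpa using hPn.conj_mem u' hu'P y⁻¹)
        simpa [mul_assoc] using h7
      have h8 := triv _ h5 h6
      have h9 : y⁻¹ * u' * y = u' := by
        have := congrArg (fun z => u' * z) h8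
        simpa [mul_assoc] using this
      have hyu : u' * y = y * u' := by
        have := congrArg (fun z => y * z) h9
        simpa [mul_assoc] using this
      have hcent : u' ∈ Subgroup.centralizer {y} := by
        rw [Subgroup.mem_centralizer_singleton_iff]
        first
        | exact hyu
        | exact hyu.symm
      exact ⟨⟨u', hu'P, hcent⟩, by simpa using hmk⟩
end

section
/- Let G be a finite group, p a prime, and Z a central subgroup of G of order coprime to p. Then for every p-regular y ∈ G, the number of p-elements of C_G(y) equals the number of p-elements of C_{G/Z}(yZ). -/
private lemma kill_c {G : Type*} [Group G] {p : ℕ} (hp : p.Prime)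
    {Z : Subgroup G} (hZp : ¬ p ∣ Nat.card Z) {c : G} (hc : c ∈ Z)
    {m : ℕ} (hpow : c ^ p ^ m = 1) : c = 1 := by
  have h1 : orderOf c ∣ p ^ m := orderOf_dvd_of_pow_eq_one hpow
  have h2 : orderOf c ∣ Nat.card Z := Subgroup.orderOf_dvd_natCard Z hc
  obtain ⟨j, hj, hjeq⟩ := (Nat.dvd_prime_pow hp).mp h1
  rcases Nat.eq_zero_or_pos j with h0 | hpos
  · rw [h0, pow_zero] at hjeq
    exact orderOf_eq_one_iff.mp hjeq
  · exact absurd (dvd_trans (hjeq ▸ dvd_pow_self p hpos.ne') h2) hZp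

theorem stmt_11 (G : Type*) [Group G] [Finite G] (p : ℕ) (hp : p.Prime)
    (Z : Subgroup G) [Z.Normal] (hZ : Z ≤ Subgroup.center G) (hZp : ¬ p ∣ Nat.card Z)
    (y : G) (hy : Nat.Coprime (orderOf y) p) :
    Nat.card {z : G | z ∈ Subgroup.centralizer {y} ∧ ∃ k : ℕ, orderOf z = p ^ k} =
      Nat.card {w : G ⧸ Z | w ∈ Subgroup.centralizer {(y : G ⧸ Z)} ∧
        ∃ k : ℕ, orderOf w = p ^ k} := by
  have key : ∀ c : G, c ∈ Z → ∀ m : ℕ, c ^ p ^ m = 1 → c = 1 :=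
    fun c hc m hm => kill_c hp hZp hc hm
  apply Nat.card_eq_of_bijective
    (fun z => ⟨(z.1 : G ⧸ Z), by
      obtain ⟨hz1, k, hz2⟩ := z.2
      refine ⟨?_, ?_⟩
      · rw [Subgroup.mem_centralizer_singleton_iff]
        rw [Subgroup.mem_centralizer_singleton_iff] at hz1
        rw [← QuotientGroup.mk_mul, ← QuotientGroup.mk_mul, hz1]
      · have hdvd : orderOf ((z.1 : G ⧸ Z)) ∣ p ^ k := by
          rw [← hz2]; exact orderOf_map_dvd (QuotientGroup.mk' Z) z.1
        obtain ⟨j, _, hj⟩ := (Nat.dvd_prime_pow hp).mp hdvd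
        exact ⟨j, hj⟩⟩)
  constructor
  · -- injective
    rintro ⟨z₁, hz₁c, k₁, hz₁⟩ ⟨z₂, hz₂c, k₂, hz₂⟩ h
    simp only [Subtype.mk.injEq] at h ⊢
    have hmem : z₁⁻¹ * z₂ ∈ Z := QuotientGroup.eq.mp h
    set c := z₁⁻¹ * z₂ with hc
    have hcomm : Commute z₁ c := Subgroup.mem_center_iff.mp (hZ hmem) z₁
    have hz₂e : z₂ = z₁ * c := by rw [hc]; group
    have h1 : z₁ ^ p ^ (k₁ + k₂) = 1 :=
      orderOf_dvd_iff_pow_eq_one.mp (hz₁ ▸ pow_dvd_pow p (Nat.le_add_right k₁ k₂))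
    have h2 : z₂ ^ p ^ (k₁ + k₂) = 1 :=
      orderOf_dvd_iff_pow_eq_one.mp (hz₂ ▸ pow_dvd_pow p (Nat.le_add_left k₂ k₁))
    have hcN : c ^ p ^ (k₁ + k₂) = 1 := by
      have := hcomm.mul_pow (p ^ (k₁ + k₂))
      rw [← hz₂e, h2, h1, one_mul] at this
      exact this.symm
    have : c = 1 := key c hmem _ hcN
    rw [hz₂e, this, mul_one]
  · -- surjective
    rintro ⟨w, hwc, k, hwk⟩
    obtain ⟨g, hg⟩ := QuotientGroup.mk_surjective w
    have hn0 : orderOf g ≠ 0 := (orderOf_pos g).ne'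
    set n := orderOf g with hn
    set a := n.factorization p with ha
    set m' := n / p ^ a with hm'
    have hfac : p ^ a * m' = n := Nat.ordProj_mul_ordCompl_eq_self n p
    have hcop : Nat.Coprime (p ^ k) m' := (Nat.coprime_ordCompl hp hn0).pow_left k
    have hwdvd : orderOf w ∣ n := hg ▸ orderOf_map_dvd (QuotientGroup.mk' Z) g
    -- find exponent e with g^e a p-element mapping to w
    have hdvd1 : ∀ t : ℕ, (g ^ (m' * t)) ^ p ^ a = 1 := by
      intro t
      rw [← pow_mul]
      exact orderOf_dvd_iff_pow_eq_one.mp ⟨t, by rw [← hn, ← hfac]; ring⟩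
    obtain ⟨e, hge, hwe⟩ : ∃ e : ℕ, (g ^ e) ^ p ^ a = 1 ∧ w ^ e = w := by
      rcases eq_or_ne k 0 with hk0 | hk0
      · have hw1 : w = 1 := orderOf_eq_one_iff.mp (by rw [hwk, hk0, pow_zero])
        exact ⟨m' * 1, hdvd1 1, by rw [hw1, one_pow]⟩
      · obtain ⟨t, -, ht⟩ := Nat.exists_mul_mod_eq_one_of_coprime hcop.symm
          (Nat.one_lt_pow hk0 hp.one_lt)
        refine ⟨m' * t, hdvd1 t, ?_⟩
        calc w ^ (m' * t) = w ^ (m' * t % orderOf w) := (pow_mod_orderOf w _).symm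
          _ = w := by rw [hwk, ht, pow_one]
    -- x = g^e is a p-element lifting w
    set x := g ^ e with hx
    have hmkx : (x : G ⧸ Z) = w := by
      rw [hx]
      show ((QuotientGroup.mk' Z) (g ^ e) : G ⧸ Z) = w
      rw [map_pow]
      show ((g : G ⧸ Z)) ^ e = w
      rw [hg, hwe]
    -- x commutes with y
    set c := (y⁻¹ * x * y) * x⁻¹ with hcdef
    have hcZ : c ∈ Z := by
      rw [← QuotientGroup.eq_one_iff]
      have hwy : w * (y : G ⧸ Z) = (y : G ⧸ Z) * w :=
        Subgroup.mem_centralizer_singleton_iff.mp hwc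
      show ((QuotientGroup.mk' Z) ((y⁻¹ * x * y) * x⁻¹) : G ⧸ Z) = 1
      simp only [map_mul, map_inv]
      show ((y : G ⧸ Z))⁻¹ * ↑x * ↑y * (↑x)⁻¹ = 1
      rw [hmkx, mul_inv_eq_one, mul_assoc, hwy, ← mul_assoc, inv_mul_cancel, one_mul]
    have hcc : Commute c x := (Subgroup.mem_center_iff.mp (hZ hcZ) x).symm
    have hconj : y⁻¹ * x * y = c * x := by rw [hcdef]; group
    have hcpow : c ^ p ^ a = 1 := by
      have h1 : (y⁻¹ * x * y) ^ p ^ a = 1 := by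
        have := conj_pow (a := y⁻¹) (b := x) (i := p ^ a)
        rw [inv_inv] at this
        rw [this, hge, mul_one, inv_mul_cancel]
      rw [hconj, hcc.mul_pow, hge, mul_one] at h1
      exact h1
    have hc1 : c = 1 := key c hcZ a hcpow
    have hxy : x * y = y * x := by
      have := hconj
      rw [hc1, one_mul] at this
      calc x * y = y * (y⁻¹ * x * y) := by group
        _ = y * x := by rw [this]
    -- assemble
    have hxk : ∃ j, orderOf x = p ^ j := by
      obtain ⟨j, _, hj⟩ := (Nat.dvd_prime_pow hp).mp (orderOf_dvd_of_pow_eq_one hge)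
      exact ⟨j, hj⟩
    exact ⟨⟨x, Subgroup.mem_centralizer_singleton_iff.mpr hxy, hxk⟩, Subtype.ext hmkx⟩
end

section
/- Let G be a finite group with cyclic Sylow p-subgroup P of order greater than 1, and suppose O_p(G) = 1. Let Ω be the unique subgroup of P of order p. Then N = N_G(Ω) is a proper subgroup of G, and N is strongly p-embedded in G: p divides |N| and p does not divide |N ∩ N^g| for all g ∈ G \ N. -/
private lemma uniq_in_cyclic {α : Type*} [Group α] [Finite α] [IsCyclic α]
    {p : ℕ} (hp : p.Prime) (A B : Subgroup α)
    (hA : Nat.card A = p) (hB : Nat.card B = p) : A = B := by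
  classical
  have : Fintype α := Fintype.ofFinite α
  set T : Finset α := Finset.univ.filter (fun a => a ^ p = 1) with hT
  have hTcard : T.card ≤ p := IsCyclic.card_pow_eq_one_le hp.pos
  have key : ∀ C : Subgroup α, Nat.card C = p → (C : Set α).toFinset = T := by
    intro C hC
    have hsub : (C : Set α).toFinset ⊆ T := by
      intro x hx
      simp only [Set.mem_toFinset, SetLike.mem_coe] at hx
      simp only [hT, Finset.mem_filter, Finset.mem_univ, true_and]
      have : (⟨x, hx⟩ : C) ^ Nat.card C = 1 := pow_card_eq_one'
      rw [hC] at this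
      simpa using congrArg (Subtype.val) this
    have hcard : (C : Set α).toFinset.card = p := by
      rw [Set.toFinset_card]
      simpa [Nat.card_eq_fintype_card] using hC
    exact Finset.eq_of_subset_of_card_le hsub (by omega)
  have := (key A hA).trans (key B hB).symm
  ext x
  have hx := Finset.ext_iff.mp this x
  simpa [Set.mem_toFinset] using hx

theorem stmt_15 (G : Type*) [Group G] [Finite G] (p : ℕ) (hp : p.Prime)
    (P : Sylow p G) (hcyc : IsCyclic (P : Subgroup G)) (hP1 : 1 < Nat.card (P : Subgroup G))
    (hOp : ∀ Q : Subgroup G, Q.Normal → IsPGroup p Q → Q = ⊥)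
    (Ω : Subgroup G) (hΩle : Ω ≤ (P : Subgroup G)) (hΩ : Nat.card Ω = p) :
    Subgroup.normalizer ((Ω : Subgroup G) : Set G) ≠ ⊤ ∧
    p ∣ Nat.card (Subgroup.normalizer (Ω : Set G)) ∧
    ∀ g : G, g ∉ Subgroup.normalizer (Ω : Set G) →
      ¬ p ∣ Nat.card
        (Subgroup.normalizer (Ω : Set G) ⊓ ((Subgroup.normalizer (Ω : Set G)).map (MulAut.conj g).toMonoidHom) : Subgroup G) := by
  haveI : Fact p.Prime := ⟨hp⟩
  -- all Sylow subgroups are cyclic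
  have hSylcyc : ∀ S : Sylow p G, IsCyclic (S : Subgroup G) := by
    intro S
    obtain ⟨g, hg⟩ := MulAction.exists_smul_eq G P S
    have : (S : Subgroup G) = (P : Subgroup G).map (MulAut.conj g).toMonoidHom := by
      rw [← hg]; rfl
    rw [this]
    exact isCyclic_of_surjective _
      (Subgroup.equivMapOfInjective _ _ (MulAut.conj g).injective).surjective
  -- key: subgroups of order p that normalize each other are equal
  have key : ∀ A B : Subgroup G, Nat.card A = p → Nat.card B = p →
      A ≤ Subgroup.normalizer (B : Set G) → A = B := by
    intro A B hA hB hAB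
    have hApg : IsPGroup p A := IsPGroup.of_card (by rw [hA, pow_one])
    have hBpg : IsPGroup p B := IsPGroup.of_card (by rw [hB, pow_one])
    have hsup : IsPGroup p (A ⊔ B : Subgroup G) :=
      IsPGroup.to_sup_of_normal_right' hApg hBpg hAB
    obtain ⟨S, hS⟩ := hsup.exists_le_sylow
    haveI := hSylcyc S
    have hAS : A ≤ (S : Subgroup G) := le_trans le_sup_left hS
    have hBS : B ≤ (S : Subgroup G) := le_trans le_sup_right hS
    have hA' : Nat.card (A.subgroupOf (S : Subgroup G)) = p := by
      exact (Nat.card_congr (Subgroup.subgroupOfEquivOfLe hAS).toEquiv).trans hA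
    have hB' : Nat.card (B.subgroupOf (S : Subgroup G)) = p := by
      exact (Nat.card_congr (Subgroup.subgroupOfEquivOfLe hBS).toEquiv).trans hB
    have heq := uniq_in_cyclic hp _ _ hA' hB'
    have hmap := congrArg (Subgroup.map (S : Subgroup G).subtype) heq
    rwa [Subgroup.subgroupOf_map_subtype, Subgroup.subgroupOf_map_subtype,
      inf_eq_left.mpr hAS, inf_eq_left.mpr hBS] at hmap
  refine ⟨?_, ?_, ?_⟩
  · intro h
    have hnorm : Ω.Normal := Subgroup.normalizer_eq_top_iff.mp h
    have hbot := hOp Ω hnorm (IsPGroup.of_card (by rw [hΩ, pow_one]))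
    rw [hbot, Subgroup.card_bot] at hΩ
    exact hp.one_lt.ne hΩ
  · rw [← hΩ]; exact Subgroup.card_dvd_of_le Subgroup.le_normalizer
  · intro g hg hdvd
    obtain ⟨z, hz⟩ := exists_prime_orderOf_dvd_card' (G :=
      ((Subgroup.normalizer (Ω : Set G)) ⊓ ((Subgroup.normalizer (Ω : Set G)).map (MulAut.conj g).toMonoidHom) : Subgroup G)) p hdvd
    set A := Subgroup.zpowers (z : G) with hAdef
    have hzG : orderOf (z : G) = p := by rw [Subgroup.orderOf_coe, hz]
    have hAcard : Nat.card A = p := by rw [hAdef, Nat.card_zpowers, hzG]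
    have hz1 : (z : G) ∈ (Subgroup.normalizer (Ω : Set G)) := z.2.1
    have hz2 : (z : G) ∈ (Subgroup.normalizer (Ω : Set G)).map (MulAut.conj g).toMonoidHom := z.2.2
    have hAΩ : A = Ω := key A Ω hAcard hΩ (by rwa [hAdef, Subgroup.zpowers_le])
    have hmapnorm : (Subgroup.normalizer (Ω : Set G)).map (MulAut.conj g).toMonoidHom
        = Subgroup.normalizer ((Ω.map (MulAut.conj g).toMonoidHom : Subgroup G) : Set G) :=
      Subgroup.map_equiv_normalizer_eq Ω (MulAut.conj g)
    have hΩgcard : Nat.card (Ω.map (MulAut.conj g).toMonoidHom) = p := by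
      rw [← hΩ]
      exact (Nat.card_congr (Subgroup.equivMapOfInjective _ _
        (MulAut.conj g).injective).toEquiv).symm
    have hAΩg : A = Ω.map (MulAut.conj g).toMonoidHom := by
      apply key A _ hAcard hΩgcard
      rw [← hmapnorm, hAdef, Subgroup.zpowers_le]
      exact hz2
    have hΩΩg : Ω.map (MulAut.conj g).toMonoidHom = Ω := hAΩg.symm.trans hAΩ
    apply hg
    rw [Subgroup.mem_normalizer_iff]
    intro h
    constructor
    · intro hh
      have : (MulAut.conj g) h ∈ Ω.map (MulAut.conj g).toMonoidHom :=
        Subgroup.mem_map_of_mem _ hh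
      rw [hΩΩg] at this
      simpa [MulAut.conj] using this
    · intro hh
      have : g * h * g⁻¹ ∈ Ω.map (MulAut.conj g).toMonoidHom := by
        rw [hΩΩg]; exact hh
      obtain ⟨x, hx, hxe⟩ := this
      have hx2 : g * x * g⁻¹ = g * h * g⁻¹ := by
        simpa [MulAut.conj_apply] using hxe
      have hx3 : x = h := mul_left_cancel (mul_right_cancel hx2)
      rwa [hx3] at hx
end

section
/- Let G be a finite group, p a prime, and suppose every nontrivial p-element x of G satisfies: C_G(x) has a normal p-complement. Suppose the Sylow p-subgroups of G are Klein four-groups (elementary abelian of order 4 with p = 2). Then for every involution t ∈ G and every element g of odd order in C_G(t), the element tg has no square root in G. -/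
theorem stmt_17 (G : Type*) [Group G] [Finite G]
    (hcomp : ∀ x : G, x ≠ 1 → (∃ k : ℕ, orderOf x = 2 ^ k) →
      ∃ N : Subgroup G, N ≤ Subgroup.centralizer {x} ∧
        (∀ h ∈ Subgroup.centralizer {x}, ∀ n ∈ N, h * n * h⁻¹ ∈ N) ∧
        ¬ 2 ∣ Nat.card N ∧
        ∃ k : ℕ, Nat.card (Subgroup.centralizer {x}) / Nat.card N = 2 ^ k)
    (hSyl : ∀ S : Sylow 2 G, Nat.card (S : Subgroup G) = 4 ∧
      ∀ s ∈ (S : Subgroup G), s * s = 1)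
    (t : G) (ht2 : t * t = 1) (ht1 : t ≠ 1)
    (g : G) (hg : g ∈ Subgroup.centralizer {t}) (hgodd : Odd (orderOf g)) :
    ¬ ∃ y : G, y ^ 2 = t * g := by
  rintro ⟨y, hy⟩
  have hcomm : Commute t g := (Subgroup.mem_centralizer_singleton_iff.mp hg).symm
  have hot : orderOf t = 2 := orderOf_eq_prime (by rw [pow_two]; exact ht2) ht1
  set m := orderOf g with hm
  have hm0 : 0 < m := Nat.pos_of_ne_zero (by rintro h; simp [h] at hgodd)
  have hcop : Nat.Coprime (orderOf t) m := by
    rw [hot]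
    have : m % 2 = 1 := Nat.odd_iff.mp hgodd
    exact (Nat.prime_two.coprime_iff_not_dvd).mpr (by omega)
  have hord : orderOf (t * g) = 2 * m := by
    rw [hcomm.orderOf_mul_eq_mul_orderOf_of_coprime hcop, hot]
  have hy2 : orderOf (y ^ 2) = 2 * m := by rw [hy, hord]
  set n := orderOf y with hn
  have hn0 : 0 < n := orderOf_pos y
  have hpow : orderOf (y ^ 2) = n / Nat.gcd n 2 := orderOf_pow y
  have hgcd : Nat.gcd n 2 = 2 := by
    rcases (Nat.dvd_prime Nat.prime_two).mp (Nat.gcd_dvd_right n 2) with h' | h'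
    · exfalso
      have hne : n = 2 * m := by
        rw [hpow, h'] at hy2; simpa using hy2
      have h2n : ¬ 2 ∣ n := by
        intro hd
        have : 2 ∣ Nat.gcd n 2 := Nat.dvd_gcd hd dvd_rfl
        omega
      exact h2n (hne ▸ Dvd.intro m rfl)
    · exact h'
  have hn4 : n = 4 * m := by
    have := hpow
    rw [hgcd, hy2] at this
    have h2 : 2 ∣ n := hgcd ▸ Nat.gcd_dvd_left n 2
    omega
  have hzord : orderOf (y ^ m) = 4 := by
    rw [orderOf_pow, ← hn, hn4, Nat.gcd_comm, Nat.gcd_eq_left (dvd_mul_left m 4),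
      Nat.mul_div_cancel _ hm0]
  -- y ^ m is a 2-element of order 4; put it in a Sylow 2-subgroup
  set z := y ^ m with hz
  have hpg : IsPGroup 2 (Subgroup.zpowers z) :=
    IsPGroup.of_card (n := 2) (by rw [Nat.card_zpowers, hzord]; norm_num)
  obtain ⟨S, hS⟩ := hpg.exists_le_sylow
  have hzS : z ∈ (S : Subgroup G) := hS (Subgroup.mem_zpowers z)
  have := (hSyl S).2 z hzS
  have : z ^ 2 = 1 := by rw [pow_two]; exact this
  have h2 : orderOf z ∣ 2 := orderOf_dvd_of_pow_eq_one this
  rw [hzord] at h2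
  norm_num at h2
end

section
/- Let G be a finite group, p a prime, y ∈ G p-regular, and suppose G has a Sylow p-subgroup S. Every solution z of z^{|S|} = y can be written uniquely as z = u·v = v·u, where u is the unique generator of ⟨y⟩ with u^{|S|} = y and v is a p-element of C_G(y). -/
theorem stmt_19 (G : Type*) [Group G] [Finite G] (p : ℕ) (hp : p.Prime)
    (S : Sylow p G) (y : G) (hy : Nat.Coprime (orderOf y) p)
    (z : G) (hz : z ^ (Nat.card (S : Subgroup G)) = y) :
    ∃! uv : G × G, uv.1 ∈ Subgroup.zpowers y ∧
      Subgroup.zpowers uv.1 = Subgroup.zpowers y ∧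
      uv.1 ^ (Nat.card (S : Subgroup G)) = y ∧
      z = uv.1 * uv.2 ∧ uv.1 * uv.2 = uv.2 * uv.1 ∧
      uv.2 ∈ Subgroup.centralizer {y} ∧ (∃ k : ℕ, orderOf uv.2 = p ^ k) := by
  haveI hpf : Fact p.Prime := ⟨hp⟩
  set n := Nat.card (S : Subgroup G) with hn
  have hk0 : orderOf z ≠ 0 := (orderOf_pos z).ne'
  set k := orderOf z with hk
  set a := k.factorization p with ha
  set m := k / p ^ a with hm
  have hkm : p ^ a * m = k := Nat.ordProj_mul_ordCompl_eq_self k p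
  have hmp : Nat.Coprime p m := Nat.coprime_ordCompl hp hk0
  obtain ⟨A, B, hAB⟩ : IsCoprime ((p ^ a : ℕ) : ℤ) (m : ℤ) :=
    Nat.Coprime.isCoprime (Nat.Coprime.pow_left _ hmp)
  set u := z ^ (A * (p ^ a : ℕ) : ℤ) with hu
  set v := z ^ (B * (m : ℕ) : ℤ) with hv
  have hzk : z ^ (k : ℤ) = 1 := by
    rw [zpow_natCast, pow_orderOf_eq_one]
  have key : ∀ i : ℤ, (k : ℤ) ∣ i → z ^ i = 1 := by
    rintro i ⟨c, hc⟩
    rw [hc, zpow_mul, hzk, one_zpow]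
  have huv : u * v = z := by
    rw [hu, hv, ← zpow_add, hAB, zpow_one]
  have hum : u ^ m = 1 := by
    rw [hu, ← zpow_natCast, ← zpow_mul]
    exact key _ ⟨A, by push_cast [← hkm]; ring⟩
  have hordu : orderOf u ∣ m := orderOf_dvd_of_pow_eq_one hum
  have hvpa : v ^ (p ^ a) = 1 := by
    rw [hv, ← zpow_natCast, ← zpow_mul]
    exact key _ ⟨B, by push_cast [← hkm]; ring⟩
  have hordv : orderOf v ∣ p ^ a := orderOf_dvd_of_pow_eq_one hvpa
  have hns : n = p ^ ((Nat.card G).factorization p) := Sylow.card_eq_multiplicity S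
  have hpan : p ^ a ∣ n := by
    rw [hns, ha]
    exact pow_dvd_pow p ((Nat.factorization_le_iff_dvd hk0 Nat.card_pos.ne').mpr
      (orderOf_dvd_natCard z) p)
  obtain ⟨c, hc⟩ := hpan
  have hun : u ^ n = y := by
    rw [← hz, hu, ← zpow_natCast, ← zpow_mul, ← zpow_natCast z n]
    have hA1 : (A * ((p ^ a : ℕ) : ℤ)) = 1 - B * (m : ℤ) := by linarith [hAB]
    have : (A * ((p ^ a : ℕ) : ℤ) * (n : ℤ)) = (n : ℤ) + (k : ℤ) * (-(B * c)) := by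
      rw [hA1]
      push_cast [← hkm, hc]
      ring
    rw [this, zpow_add, zpow_mul, hzk, one_zpow, mul_one]
  -- coprimality of n with orderOf u
  have hcopnu : Nat.Coprime n (orderOf u) := by
    rw [hns]
    exact Nat.Coprime.pow_left _ (hmp.coprime_dvd_right hordu)
  obtain ⟨C, D, hCD⟩ : IsCoprime ((n : ℕ) : ℤ) ((orderOf u : ℕ) : ℤ) :=
    Nat.Coprime.isCoprime hcopnu
  have hu_mem : u ∈ Subgroup.zpowers y := by
    rw [Subgroup.mem_zpowers_iff]
    refine ⟨C, ?_⟩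
    have h0 : u = u ^ (C * (n : ℤ) + D * (orderOf u : ℤ)) := by rw [hCD, zpow_one]
    rw [h0, zpow_add, mul_comm C, zpow_mul, zpow_natCast, hun,
      mul_comm D ((orderOf u : ℤ)), zpow_mul, zpow_natCast, pow_orderOf_eq_one,
      one_zpow, mul_one]
  have hy_memz : y ∈ Subgroup.zpowers z :=
    Subgroup.mem_zpowers_iff.mpr ⟨(n : ℤ), by rw [zpow_natCast, hz]⟩
  have hyz : Subgroup.zpowers y ≤ Subgroup.zpowers z :=
    (Subgroup.zpowers_le).mpr hy_memz
  have hzpeq : Subgroup.zpowers u = Subgroup.zpowers y := by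
    refine le_antisymm ((Subgroup.zpowers_le).mpr hu_mem) ((Subgroup.zpowers_le).mpr ?_)
    exact Subgroup.mem_zpowers_iff.mpr ⟨(n : ℤ), by rw [zpow_natCast, hun]⟩
  have hcomm : ∀ x1 ∈ Subgroup.zpowers z, ∀ x2 ∈ Subgroup.zpowers z, Commute x1 x2 := by
    rintro x1 hx1 x2 hx2
    obtain ⟨i, rfl⟩ := Subgroup.mem_zpowers_iff.mp hx1
    obtain ⟨j, rfl⟩ := Subgroup.mem_zpowers_iff.mp hx2
    exact (Commute.refl z).zpow_zpow i j
  have hv_memz : v ∈ Subgroup.zpowers z := Subgroup.mem_zpowers_iff.mpr ⟨B * (m : ℤ), rfl⟩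
  have hu_memz : u ∈ Subgroup.zpowers z :=
    Subgroup.mem_zpowers_iff.mpr ⟨A * ((p ^ a : ℕ) : ℤ), rfl⟩
  have hvy : Commute v y := hcomm v hv_memz y hy_memz
  have hv_cent : v ∈ Subgroup.centralizer {y} := by
    rw [Subgroup.mem_centralizer_iff]
    rintro h rfl
    exact hvy.symm
  obtain ⟨t, _, hvt⟩ := (Nat.dvd_prime_pow hp).mp hordv
  refine ⟨(u, v), ⟨hu_mem, hzpeq, hun, huv.symm, hcomm u hu_memz v hv_memz, hv_cent,
    ⟨t, hvt⟩⟩, ?_⟩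
  rintro ⟨u', v'⟩ ⟨h1, h2, h3, h4, h5, h6, t', ht'⟩
  dsimp only at h1 h2 h3 h4 h5 h6 ht'
  have hu'z : u' ∈ Subgroup.zpowers z := hyz h1
  have hv'z : v' ∈ Subgroup.zpowers z := by
    have : v' = u'⁻¹ * z := by rw [h4]; group
    rw [this]
    exact mul_mem (inv_mem hu'z) (Subgroup.mem_zpowers z)
  have hordu' : orderOf u' ∣ orderOf y := by
    obtain ⟨d, hd⟩ := Subgroup.mem_zpowers_iff.mp h1
    apply orderOf_dvd_of_pow_eq_one
    rw [← hd, ← zpow_natCast, ← zpow_mul, mul_comm, zpow_mul, zpow_natCast,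
      pow_orderOf_eq_one, one_zpow]
  have hprod : u * v = u' * v' := huv.trans h4
  have hw : u⁻¹ * u' = v * v'⁻¹ := by
    calc u⁻¹ * u' = u⁻¹ * (u' * v') * v'⁻¹ := by group
      _ = u⁻¹ * (u * v) * v'⁻¹ := by rw [← hprod]
      _ = v * v'⁻¹ := by group
  have hcop_w : Nat.Coprime (orderOf (u⁻¹ * u')) p := by
    have h1' : orderOf (u⁻¹ * u') ∣ m * orderOf y := by
      refine dvd_trans ((hcomm u⁻¹ (inv_mem hu_memz) u' hu'z).orderOf_mul_dvd_lcm) ?_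
      refine dvd_trans (Nat.lcm_dvd_mul _ _) (mul_dvd_mul ?_ hordu')
      rw [orderOf_inv]; exact hordu
    exact Nat.Coprime.coprime_dvd_left h1' (Nat.Coprime.mul hmp.symm hy)
  have hdvd_w : orderOf (u⁻¹ * u') ∣ p ^ (a + t') := by
    rw [hw]
    refine dvd_trans ((hcomm v hv_memz v'⁻¹ (inv_mem hv'z)).orderOf_mul_dvd_lcm) ?_
    refine dvd_trans (Nat.lcm_dvd_mul _ _) ?_
    rw [orderOf_inv, ht', pow_add]
    exact mul_dvd_mul hordv dvd_rfl
  have hw1 : u⁻¹ * u' = 1 := by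
    rw [← orderOf_eq_one_iff]
    exact Nat.eq_one_of_dvd_coprimes (Nat.Coprime.pow_right _ hcop_w) dvd_rfl hdvd_w
  have hu'u : u' = u := by
    have := hw1
    rwa [inv_mul_eq_one, eq_comm] at this
  have hv'v : v' = v := by
    have h2' : v * v'⁻¹ = 1 := by rw [← hw, hw1]
    have := h2'
    rw [mul_inv_eq_one] at this
    exact this.symm
  exact Prod.ext hu'u hv'v
end
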